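/- Let H be a real Hilbert space, C ⊆ H a nonempty closed r-prox-regular set with r > 0, and suppose x_n ∈ C, x_n → x strongly in C, ξ_n ∈ N(C, x_n) with ‖ξ_n‖ ≤ β for all n, and ξ_n converges weakly to ξ. Then ξ ∈ N(C, x); in particular ⟨ξ, c − x⟩ ≤ (β/(2r))‖c − x‖² for all c ∈ C. -/

import Mathlib

open Set Filter Metric MeasureTheory Topology
open scoped RealInnerProductSpace NNReal ENNReal

variable {H : Type*} [NormedAddCommGroup H] [InnerProductSpace ℝ H] [CompleteSpace H]

/-- The proximal normal cone of a set `C` at a point `x`: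
`ξ ∈ N(C,x)` iff there exist `σ > 0`, `δ > 0` with
`⟪ξ, y - x⟫ ≤ δ ‖y - x‖²` for all `y ∈ C` with `‖y - x‖ ≤ σ`. -/
def proxNormalCone (C : Set H) (x : H) : Set H :=
  {ξ | ∃ σ > (0 : ℝ), ∃ δ > (0 : ℝ), ∀ y ∈ C, ‖y - x‖ ≤ σ → ⟪ξ, y - x⟫ ≤ δ * ‖y - x‖ ^ 2}

/-- `C` is `r`-prox-regular: every point `s` with `d(s,C) < r` has a unique
nearest point `p s` in `C`, and the nearest-point map `p` is continuous on
the enlargement `U_r(C) = {s | d(s,C) < r}`. -/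
def IsProxRegular (C : Set H) (r : ℝ) : Prop :=
  ∃ p : H → H,
    (∀ s : H, infDist s C < r →
      (p s ∈ C ∧ dist s (p s) = infDist s C) ∧
      ∀ y ∈ C, dist s y = infDist s C → y = p s) ∧
    ContinuousOn p {s : H | infDist s C < r}

/-- The set `f(x) - N(C,x)`. -/
def flowSet (C : Set H) (f : H → H) (x : H) : Set H :=
  {v | f x - v ∈ proxNormalCone C x}

/-- `x : ℝ → H` is the (locally absolutely continuous) solution of the differential
inclusion `ẋ(t) ∈ f(x(t)) - N(C, x(t))` a.e. on `[0, ∞)`, `x(0) = x₀`, with a.e.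
derivative `x'`: it starts at `x₀`, stays in `C`, is a locally Bochner integral of
`x'` (local absolute continuity), has derivative `x' t` at a.e. `t ≥ 0`, and
satisfies the inclusion at a.e. `t ≥ 0`. -/
structure IsSolutionOf (C : Set H) (f : H → H) (x₀ : H) (x x' : ℝ → H) : Prop where
  init : x 0 = x₀
  memC : ∀ t ≥ (0 : ℝ), x t ∈ C
  locInt : ∀ T > (0 : ℝ), IntegrableOn x' (Icc 0 T)
  integ : ∀ t ≥ (0 : ℝ), x t = x₀ + ∫ s in (0 : ℝ)..t, x' s
  deriv : ∀ᵐ t ∂(volume.restrict (Ici (0 : ℝ))), HasDerivAt x (x' t) t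
  incl : ∀ᵐ t ∂(volume.restrict (Ici (0 : ℝ))), x' t ∈ flowSet C f (x t)

set_option linter.unusedSectionVars false
set_option linter.unusedVariables false
set_option maxHeartbeats 1000000

/-- Auxiliary convex function `φ(v) = (‖v‖² - d(v,C)²)/2`. -/
noncomputable def phiC (C : Set H) (v : H) : ℝ := (‖v‖^2 - (Metric.infDist v C)^2)/2

lemma phiC_ge (C : Set H) {y : H} (hy : y ∈ C) (v : H) :
    ⟪v, y⟫ - ‖y‖^2/2 ≤ phiC C v := by
  have h1 : infDist v C ≤ ‖v - y‖ := by
    simpa [dist_eq_norm] using infDist_le_dist_of_mem (x := v) hy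
  have h2 : (infDist v C)^2 ≤ ‖v - y‖^2 :=
    pow_le_pow_left₀ infDist_nonneg h1 2
  have h3 : ‖v - y‖^2 = ‖v‖^2 - 2*⟪v,y⟫ + ‖y‖^2 := norm_sub_sq_real v y
  unfold phiC
  nlinarith [h2]

lemma phiC_eq_of_attain (C : Set H) {q v : H} (hq : q ∈ C)
    (hd : dist v q = infDist v C) : phiC C v = ⟪v, q⟫ - ‖q‖^2/2 := by
  have h3 : ‖v - q‖^2 = ‖v‖^2 - 2*⟪v,q⟫ + ‖q‖^2 := norm_sub_sq_real v q
  unfold phiC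
  rw [← hd, dist_eq_norm]
  nlinarith [h3]

lemma phiC_near (C : Set H) (hCne : C.Nonempty) (v : H) {ε : ℝ} (hε : 0 < ε) :
    ∃ y ∈ C, phiC C v ≤ ⟪v, y⟫ - ‖y‖^2/2 + ε := by
  set d := infDist v C with hd
  have hdnn : 0 ≤ d := infDist_nonneg
  have hlt : d < Real.sqrt (d^2 + 2*ε) := by
    have : d = Real.sqrt (d^2) := by rw [Real.sqrt_sq hdnn]
    rw [this]
    apply Real.sqrt_lt_sqrt (by positivity)
    nlinarith
  obtain ⟨y, hy, hdy⟩ := (infDist_lt_iff hCne).mp hlt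
  refine ⟨y, hy, ?_⟩
  have h1 : ‖v - y‖^2 < d^2 + 2*ε := by
    have : dist v y < Real.sqrt (d^2 + 2*ε) := hdy
    have h2 : dist v y ^ 2 < (Real.sqrt (d^2 + 2*ε))^2 := by
      apply pow_lt_pow_left₀ this dist_nonneg (by norm_num)
    rwa [Real.sq_sqrt (by positivity), dist_eq_norm] at h2
  have h3 : ‖v - y‖^2 = ‖v‖^2 - 2*⟪v,y⟫ + ‖y‖^2 := norm_sub_sq_real v y
  unfold phiC
  nlinarith

lemma phiC_convex_combo (C : Set H) (hCne : C.Nonempty) (v₁ v₂ : H) {a b : ℝ}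
    (ha : 0 ≤ a) (hb : 0 ≤ b) (hab : a + b = 1) :
    phiC C (a•v₁ + b•v₂) ≤ a * phiC C v₁ + b * phiC C v₂ := by
  apply le_of_forall_pos_le_add
  intro ε hε
  obtain ⟨y, hy, hny⟩ := phiC_near C hCne (a•v₁ + b•v₂) hε
  have e1 : ⟪a•v₁ + b•v₂, y⟫ = a*⟪v₁,y⟫ + b*⟪v₂,y⟫ := by
    rw [inner_add_left, real_inner_smul_left, real_inner_smul_left]
  have h1 : ⟪v₁, y⟫ - ‖y‖^2/2 ≤ phiC C v₁ := phiC_ge C hy v₁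
  have h2 : ⟪v₂, y⟫ - ‖y‖^2/2 ≤ phiC C v₂ := phiC_ge C hy v₂
  calc phiC C (a•v₁ + b•v₂) ≤ ⟪a•v₁ + b•v₂, y⟫ - ‖y‖^2/2 + ε := hny
    _ = a*(⟪v₁,y⟫ - ‖y‖^2/2) + b*(⟪v₂,y⟫ - ‖y‖^2/2) + ε := by rw [e1]; nlinarith [hab]
    _ ≤ a * phiC C v₁ + b * phiC C v₂ + ε := by nlinarith [mul_le_mul_of_nonneg_left h1 ha, mul_le_mul_of_nonneg_left h2 hb]

lemma phiC_continuous (C : Set H) : Continuous (phiC C) := by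
  unfold phiC
  exact (((continuous_norm.pow 2).sub ((continuous_infDist_pt C).pow 2)).div_const 2)

/-- Existence of the Moreau proximal point of `φ_C` at `w`. -/
lemma exists_prox (C : Set H) (hCne : C.Nonempty) (w : H) :
    ∃ V : H, ∀ v : H, phiC C V + ‖V - w‖^2/2 ≤ phiC C v + ‖v - w‖^2/2 := by
  obtain ⟨z₀, hz₀⟩ := hCne
  set ψ : H → ℝ := fun v => phiC C v + ‖v - w‖^2/2 with hψ
  have hlb : ∀ v, ⟪w, z₀⟫ - ‖z₀‖^2 ≤ ψ v := by
    intro v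
    have h1 : ⟪v, z₀⟫ - ‖z₀‖^2/2 ≤ phiC C v := phiC_ge C hz₀ v
    have h2 : ⟪v - w, z₀⟫ ≥ -(‖v - w‖ * ‖z₀‖) := by
      have := abs_real_inner_le_norm (v - w) z₀
      cases' abs_le.mp this with hl hr
      linarith
    have h3 : ⟪v, z₀⟫ = ⟪v - w, z₀⟫ + ⟪w, z₀⟫ := by
      rw [inner_sub_left]; ring
    have h4 : 0 ≤ (‖v - w‖ - ‖z₀‖)^2 := sq_nonneg _
    simp only [hψ]
    nlinarith [h1, h2, h4]
  have hbdd : BddBelow (Set.range ψ) := ⟨⟪w, z₀⟫ - ‖z₀‖^2, by rintro t ⟨v, rfl⟩; exact hlb v⟩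
  set μ := ⨅ v, ψ v with hμ
  have hseq : ∀ k : ℕ, ∃ v, ψ v < μ + 1/(k+1) := by
    intro k
    apply exists_lt_of_ciInf_lt
    rw [← hμ]
    have : (0:ℝ) < 1/(k+1) := by positivity
    linarith
  choose vs hvs using hseq
  have hmulow : ∀ v, μ ≤ ψ v := fun v => ciInf_le hbdd v
  -- midpoint estimate
  have hmid : ∀ j k : ℕ, ‖vs j - vs k‖^2 ≤ 4*(1/(j+1) + 1/(k+1)) := by
    intro j k
    set x := vs j - w
    set y := vs k - w
    have hmeq : (1/2:ℝ)•(vs j) + (1/2:ℝ)•(vs k) - w = (1/2:ℝ)•x + (1/2:ℝ)•y := by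
      simp only [x, y, smul_sub]
      module
    have hpar : ‖(1/2:ℝ)•x + (1/2:ℝ)•y‖^2 = (‖x‖^2 + ‖y‖^2)/2 - ‖x - y‖^2/4 := by
      have e1 : ‖(1/2:ℝ)•x + (1/2:ℝ)•y‖^2 = ‖(1/2:ℝ)•x‖^2 + 2*⟪(1/2:ℝ)•x, (1/2:ℝ)•y⟫ + ‖(1/2:ℝ)•y‖^2 :=
        norm_add_sq_real _ _
      have e2 : ‖x - y‖^2 = ‖x‖^2 - 2*⟪x,y⟫ + ‖y‖^2 := norm_sub_sq_real x y
      rw [e1, norm_smul, norm_smul, real_inner_smul_left, real_inner_smul_right]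
      simp only [Real.norm_eq_abs]
      rw [show |(1/2:ℝ)| = 1/2 by norm_num]
      nlinarith [e2]
    have hconv : phiC C ((1/2:ℝ)•(vs j) + (1/2:ℝ)•(vs k)) ≤ (1/2)*phiC C (vs j) + (1/2)*phiC C (vs k) :=
      phiC_convex_combo C ⟨z₀, hz₀⟩ _ _ (by norm_num) (by norm_num) (by norm_num)
    have hxy : x - y = vs j - vs k := by simp only [x, y]; abel
    have hmu := hmulow ((1/2:ℝ)•(vs j) + (1/2:ℝ)•(vs k))
    have h1 := hvs j
    have h2 := hvs k
    simp only [hψ] at hmu h1 h2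
    rw [hmeq, hpar, hxy] at hmu
    have hxj : ‖x‖^2 = ‖vs j - w‖^2 := rfl
    have hyk : ‖y‖^2 = ‖vs k - w‖^2 := rfl
    nlinarith [hconv, hmu, h1, h2]
  have hcauchy : CauchySeq vs := by
    rw [Metric.cauchySeq_iff]
    intro ε hε
    obtain ⟨N, hN⟩ := exists_nat_gt (8/ε^2)
    refine ⟨N, fun m hm n hn => ?_⟩
    have hb : ‖vs m - vs n‖^2 ≤ 8/(N+1) := by
      have h1 : (1:ℝ)/(m+1) ≤ 1/(N+1) := by
        apply div_le_div_of_nonneg_left (by norm_num) (by positivity)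
        have : (N:ℝ) ≤ m := Nat.cast_le.mpr hm
        linarith
      have h2 : (1:ℝ)/(n+1) ≤ 1/(N+1) := by
        apply div_le_div_of_nonneg_left (by norm_num) (by positivity)
        have : (N:ℝ) ≤ n := Nat.cast_le.mpr hn
        linarith
      calc ‖vs m - vs n‖^2 ≤ 4*(1/(m+1) + 1/(n+1)) := hmid m n
        _ ≤ 4*(1/(N+1) + 1/(N+1)) := by linarith
        _ = 8/(N+1) := by ring
    have h8 : 8/((N:ℝ)+1) < ε^2 := by
      rw [div_lt_iff₀ (by positivity)]
      rw [div_lt_iff₀ (by positivity)] at hN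
      nlinarith [hN, sq_nonneg ε, hε]
    rw [dist_eq_norm]
    have : ‖vs m - vs n‖^2 < ε^2 := lt_of_le_of_lt hb h8
    nlinarith [norm_nonneg (vs m - vs n), hε, this]
  obtain ⟨V, hV⟩ := cauchySeq_tendsto_of_complete hcauchy
  refine ⟨V, fun v => ?_⟩
  have hcψ : Continuous ψ := by
    apply (phiC_continuous C).add
    exact ((continuous_id.sub continuous_const).norm.pow 2).div_const 2
  have hlim1 : Tendsto (fun k => ψ (vs k)) atTop (nhds (ψ V)) :=
    (hcψ.tendsto V).comp hV
  have hlim2 : Tendsto (fun k => ψ (vs k)) atTop (nhds μ) := by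
    apply tendsto_of_tendsto_of_tendsto_of_le_of_le (tendsto_const_nhds) ?_ (fun k => hmulow (vs k)) (fun k => (hvs k).le)
    have : Tendsto (fun k : ℕ => μ + 1/(k+1)) atTop (nhds (μ + 0)) := by
      apply Tendsto.add tendsto_const_nhds
      exact tendsto_one_div_add_atTop_nhds_zero_nat
    simpa using this
  have : ψ V = μ := tendsto_nhds_unique hlim1 hlim2
  calc phiC C V + ‖V - w‖^2/2 = ψ V := rfl
    _ = μ := this
    _ ≤ ψ v := hmulow v

/-- Subgradient inequality at a proximal point: `w - V ∈ ∂φ(V)`. -/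
lemma prox_subgrad (C : Set H) (hCne : C.Nonempty) (w V : H)
    (hmin : ∀ v : H, phiC C V + ‖V - w‖^2/2 ≤ phiC C v + ‖v - w‖^2/2) :
    ∀ v : H, phiC C V + ⟪w - V, v - V⟫ ≤ phiC C v := by
  intro v
  apply le_of_forall_pos_le_add
  intro ε hε
  set M : ℝ := ‖v - V‖^2/2 with hM
  have hMnn : 0 ≤ M := by positivity
  set s : ℝ := min 1 (ε/(M+1)) with hs
  have hs0 : 0 < s := lt_min one_pos (by positivity)
  have hs1 : s ≤ 1 := min_le_left _ _
  have hsM : s * M ≤ ε := by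
    have h1 : s ≤ ε/(M+1) := min_le_right _ _
    have h2 : s * M ≤ (ε/(M+1)) * M := mul_le_mul_of_nonneg_right h1 hMnn
    have h3 : (ε/(M+1)) * M ≤ ε := by
      rw [div_mul_eq_mul_div, div_le_iff₀ (by positivity)]
      nlinarith
    linarith
  -- the point V + s•(v - V)
  set vs : H := V + s•(v - V) with hvs
  have hcomb : vs = (1-s)•V + s•v := by rw [hvs]; module
  have hφs : phiC C vs ≤ (1-s) * phiC C V + s * phiC C v := by
    rw [hcomb]
    exact phiC_convex_combo C hCne V v (by linarith) (by linarith) (by ring)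
  have hnorm : ‖vs - w‖^2 = ‖V - w‖^2 + 2*s*⟪V - w, v - V⟫ + s^2*‖v - V‖^2 := by
    have e0 : vs - w = (V - w) + s•(v - V) := by rw [hvs]; abel
    rw [e0, norm_add_sq_real, real_inner_smul_right, norm_smul, Real.norm_eq_abs,
      abs_of_pos hs0]
    ring
  have hm := hmin vs
  rw [hnorm] at hm
  have key : phiC C V + ⟪w - V, v - V⟫ ≤ phiC C v + s * M := by
    have hinner : ⟪w - V, v - V⟫ = -⟪V - w, v - V⟫ := by
      rw [← inner_neg_left]; congr 1; abel
    rw [hinner, hM]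
    nlinarith [hm, hφs, hs0]
  linarith [hsM, key]

/-- `z ∈ ∂φ(z + τ•ν)` when the distance `τ` is realized at `z`. -/
lemma center_subgrad (C : Set H) {z : H} (hz : z ∈ C) {ν : H} (hν : ‖ν‖ = 1)
    {τ : ℝ} (hτ : 0 ≤ τ) (hreal : Metric.infDist (z + τ•ν) C = τ) :
    ∀ v : H, phiC C (z + τ•ν) + ⟪z, v - (z + τ•ν)⟫ ≤ phiC C v := by
  intro v
  set u : H := z + τ•ν with hu
  have hdist : dist u z = Metric.infDist u C := by
    rw [dist_eq_norm, hu]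
    simp only [add_sub_cancel_left, norm_smul, Real.norm_eq_abs, abs_of_nonneg hτ, hν]
    rw [hreal]; ring
  have he : phiC C u = ⟪u, z⟫ - ‖z‖^2/2 := phiC_eq_of_attain C hz hdist
  have hge : ⟪v, z⟫ - ‖z‖^2/2 ≤ phiC C v := phiC_ge C hz v
  have hcalc : ⟪u, z⟫ + ⟪z, v - u⟫ = ⟪v, z⟫ := by
    rw [inner_sub_right, real_inner_comm z v, real_inner_comm z u]; ring
  linarith [hge, he ▸ (by linarith [hcalc] : phiC C u + ⟪z, v - u⟫ = ⟪v, z⟫ - ‖z‖^2/2)]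

lemma norm_smul_unit_sub_sq {ν : H} (hν : ‖ν‖ = 1) {c : ℝ} (hc : 0 ≤ c) (b : H) :
    ‖c•ν - b‖^2 = c^2 - 2*c*⟪ν,b⟫ + ‖b‖^2 := by
  rw [norm_sub_sq_real, real_inner_smul_left, norm_smul, Real.norm_eq_abs, abs_of_nonneg hc, hν]
  ring

/-- Extension step: if the ball of radius `τ` is realized at `z` in direction `ν`,
then so is the ball of any radius `t ∈ (τ, min(3τ, r))`. -/
lemma extend_step (C : Set H) (hCne : C.Nonempty) {r : ℝ}
    (p : H → H)
    (hp : ∀ s : H, Metric.infDist s C < r →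
      (p s ∈ C ∧ dist s (p s) = Metric.infDist s C) ∧
      ∀ y ∈ C, dist s y = Metric.infDist s C → y = p s)
    (hcont : ContinuousOn p {s : H | Metric.infDist s C < r})
    {z : H} (hz : z ∈ C) {ν : H} (hν : ‖ν‖ = 1)
    {τ t : ℝ} (hτ0 : 0 < τ) (hτt : τ < t) (ht3 : t < 3*τ) (htr : t < r)
    (hreal : Metric.infDist (z + τ•ν) C = τ) :
    Metric.infDist (z + t•ν) C = t := by
  set u : H := z + τ•ν with hu
  set w : H := z + (z + t•ν) with hw
  obtain ⟨V, hmin⟩ := exists_prox C hCne w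
  have hsub := prox_subgrad C hCne w V hmin
  have hzsub := center_subgrad C hz hν hτ0.le hreal
  -- nonexpansiveness: ‖u - V‖ ≤ t - τ
  have hVu : ‖u - V‖ ≤ t - τ := by
    have h1 := hsub u
    have h2 := hzsub V
    rw [← hu] at h2
    have h3 : ⟪z, V - u⟫ = -⟪z, u - V⟫ := by
      rw [← inner_neg_right]; congr 1; abel
    have h4 : ⟪w - V - z, u - V⟫ = ⟪w - V, u - V⟫ - ⟪z, u - V⟫ := by
      rw [inner_sub_left]
    have e : w - V - z = (u - V) + (t-τ)•ν := by
      rw [hw, hu]; module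
    have expand : ⟪(u - V) + (t-τ)•ν, u - V⟫ = ‖u - V‖^2 + (t-τ)*⟪ν, u - V⟫ := by
      rw [inner_add_left, real_inner_smul_left, real_inner_self_eq_norm_sq]
    have hsum : ‖u - V‖^2 + (t-τ)*⟪ν, u - V⟫ ≤ 0 := by
      rw [← expand, ← e, h4]
      linarith [h1, h2, h3]
    have hCS : -⟪ν, u - V⟫ ≤ ‖u - V‖ := by
      have h5 := abs_real_inner_le_norm ν (u - V)
      rw [hν, one_mul] at h5
      linarith [neg_abs_le ⟪ν, u - V⟫, h5]
    nlinarith [norm_nonneg (u - V), hsum, hCS]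
  -- V is in the tube
  have hdV : Metric.infDist V C < r := by
    have h1 : Metric.infDist V C ≤ Metric.infDist u C + dist V u :=
      infDist_le_infDist_add_dist
    rw [hreal] at h1
    rw [dist_eq_norm, norm_sub_rev] at h1
    linarith
  obtain ⟨⟨hPC, hPd⟩, hPuniq⟩ := hp V hdV
  set P : H := p V with hP
  set Y : H := w - V with hY
  -- Y = P via the continuity of p
  have hYP : Y = P := by
    set h : H := Y - P with hh
    have key : ⟪Y, h⟫ ≤ ⟪h, P⟫ := by
      set s₀ : ℝ := (r - Metric.infDist V C)/(2*(‖h‖+1)) with hs₀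
      have hs₀pos : 0 < s₀ := by
        apply div_pos (by linarith) (by positivity)
      have bound : ∀ k : ℕ, ⟪Y, h⟫ ≤ ⟪h, p (V + (s₀/(k+1))•h)⟫ := by
        intro k
        set s : ℝ := s₀/(k+1) with hs
        have hspos : 0 < s := by positivity
        have hsle : s ≤ s₀ := by
          rw [hs]
          apply div_le_self hs₀pos.le (by push_cast; linarith [Nat.cast_nonneg (α := ℝ) k])
        have htube : Metric.infDist (V + s•h) C < r := by
          have h1 : Metric.infDist (V + s•h) C ≤ Metric.infDist V C + dist (V + s•h) V :=
            infDist_le_infDist_add_dist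
          have h2 : dist (V + s•h) V = s*‖h‖ := by
            rw [dist_eq_norm]
            simp only [add_sub_cancel_left, norm_smul, Real.norm_eq_abs, abs_of_pos hspos]
          have h3 : s*‖h‖ ≤ s₀*‖h‖ := mul_le_mul_of_nonneg_right hsle (norm_nonneg h)
          have h4 : s₀*‖h‖ < (r - Metric.infDist V C)/2 + (r - Metric.infDist V C)/2 := by
            rw [hs₀]
            have hne : 0 < ‖h‖ + 1 := by positivity
            rw [div_mul_eq_mul_div, div_lt_iff₀ (by positivity)]
            nlinarith [norm_nonneg h, hdV]
          rw [h2] at h1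
          linarith
        obtain ⟨⟨hP'C, hP'd⟩, _⟩ := hp (V + s•h) htube
        set P' : H := p (V + s•h) with hP'
        have e1 : phiC C (V + s•h) = ⟪V + s•h, P'⟫ - ‖P'‖^2/2 :=
          phiC_eq_of_attain C hP'C hP'd
        have e2 : ⟪V, P'⟫ - ‖P'‖^2/2 ≤ phiC C V := phiC_ge C hP'C V
        have e3 := hsub (V + s•h)
        have e4 : (V + s•h) - V = s•h := by abel
        rw [e4] at e3
        have e5 : ⟪w - V, s•h⟫ = s*⟪Y, h⟫ := by
          rw [real_inner_smul_right, hY]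
        have e6 : ⟪V + s•h, P'⟫ = ⟪V, P'⟫ + s*⟪h, P'⟫ := by
          rw [inner_add_left, real_inner_smul_left]
        rw [e5, e1, e6] at e3
        have : s*⟪Y,h⟫ ≤ s*⟪h, P'⟫ := by linarith
        exact le_of_mul_le_mul_left (by linarith) hspos
      -- pass to the limit
      have hslim : Tendsto (fun k : ℕ => s₀/(k+1)) atTop (nhds 0) := by
        have := tendsto_one_div_add_atTop_nhds_zero_nat.const_mul s₀
        rw [mul_zero] at this
        convert this using 2 with k
        ring
      have hxlim : Tendsto (fun k : ℕ => V + (s₀/(k+1))•h) atTop (nhds V) := by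
        have hc : Continuous (fun c : ℝ => V + c•h) :=
          continuous_const.add (continuous_id.smul continuous_const)
        have := (hc.tendsto 0).comp hslim
        simpa [Function.comp_def] using this
      have hmem : ∀ k : ℕ, (V + (s₀/(k+1))•h) ∈ {s : H | Metric.infDist s C < r} := by
        intro k
        -- same tube estimate again; reprove quickly
        have hspos : 0 < s₀/(k+1) := by positivity
        have hsle : s₀/(k+1) ≤ s₀ :=
          div_le_self hs₀pos.le (by push_cast; linarith [Nat.cast_nonneg (α := ℝ) k])
        have h1 : Metric.infDist (V + (s₀/(k+1))•h) C ≤ Metric.infDist V C + dist (V + (s₀/(k+1))•h) V :=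
          infDist_le_infDist_add_dist
        have h2 : dist (V + (s₀/(k+1))•h) V = (s₀/(k+1))*‖h‖ := by
          rw [dist_eq_norm]
          simp only [add_sub_cancel_left, norm_smul, Real.norm_eq_abs, abs_of_pos hspos]
        have h3 : (s₀/(k+1))*‖h‖ ≤ s₀*‖h‖ := mul_le_mul_of_nonneg_right hsle (norm_nonneg h)
        have h4 : s₀*‖h‖ < r - Metric.infDist V C := by
          rw [hs₀]
          rw [div_mul_eq_mul_div, div_lt_iff₀ (by positivity)]
          nlinarith [norm_nonneg h, hdV]
        simp only [mem_setOf_eq]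
        rw [h2] at h1
        linarith
      have hVmem : V ∈ {s : H | Metric.infDist s C < r} := hdV
      have hplim : Tendsto (fun k : ℕ => p (V + (s₀/(k+1))•h)) atTop (nhds P) := by
        have hcw : ContinuousWithinAt p {s : H | Metric.infDist s C < r} V := hcont V hVmem
        exact hcw.tendsto.comp (tendsto_nhdsWithin_iff.mpr ⟨hxlim, Filter.Eventually.of_forall hmem⟩)
      have hinnerlim : Tendsto (fun k : ℕ => ⟪h, p (V + (s₀/(k+1))•h)⟫) atTop (nhds ⟪h, P⟫) :=
        Filter.Tendsto.inner tendsto_const_nhds hplim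
      exact ge_of_tendsto' hinnerlim bound
    -- conclude Y = P
    have h1 : ⟪Y - P, Y - P⟫ ≤ 0 := by
      have e : ⟪Y - P, Y - P⟫ = ⟪Y, Y - P⟫ - ⟪P, Y - P⟫ := by rw [inner_sub_left]
      have e2 : ⟪Y - P, P⟫ = ⟪P, Y - P⟫ := real_inner_comm _ _
      rw [hh] at key
      rw [e]
      linarith [key, e2]
    have := real_inner_self_nonpos.mp h1
    have : Y - P = 0 := this
    exact sub_eq_zero.mp this
  have hYC : Y ∈ C := by rw [hYP]; exact hPC
  have hYd : dist V Y = Metric.infDist V C := by rw [hYP]; exact hPd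
  set b : H := Y - z with hb
  set e : ℝ := ⟪ν, b⟫ with he
  -- (i) 2τe ≤ ‖b‖²
  have hi : 2*τ*e ≤ ‖b‖^2 := by
    have h1 : Metric.infDist u C ≤ dist u Y := infDist_le_dist_of_mem hYC
    rw [hreal, dist_eq_norm] at h1
    have h2 : u - Y = τ•ν - b := by rw [hu, hb, hY]; module
    have h3 : ‖τ•ν - b‖^2 = τ^2 - 2*τ*e + ‖b‖^2 := norm_smul_unit_sub_sq hν hτ0.le b
    have h4 : τ^2 ≤ ‖u - Y‖^2 := by
      have := pow_le_pow_left₀ hτ0.le h1 2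
      exact this
    rw [h2, h3] at h4
    linarith
  -- (ii) 3‖b‖² ≤ 2te
  have hii : 3*‖b‖^2 ≤ 2*t*e := by
    have h1 : Metric.infDist V C ≤ dist V z := infDist_le_dist_of_mem hz
    rw [← hYd] at h1
    rw [dist_eq_norm, dist_eq_norm] at h1
    have h2 : V - z = t•ν - b := by rw [hb, hY, hw]; module
    have h3 : V - Y = t•ν - (b + b) := by rw [hb, hY, hw]; module
    have h4 : ‖t•ν - b‖^2 = t^2 - 2*t*e + ‖b‖^2 := norm_smul_unit_sub_sq hν (by linarith) b
    have h5 : ‖t•ν - (b+b)‖^2 = t^2 - 2*t*⟪ν, b+b⟫ + ‖b+b‖^2 :=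
      norm_smul_unit_sub_sq hν (by linarith) (b+b)
    have h6 : ⟪ν, b+b⟫ = 2*e := by rw [inner_add_right]; rw [he]; ring
    have h7 : ‖b+b‖^2 = 4*‖b‖^2 := by
      have : b + b = (2:ℝ)•b := by module
      rw [this, norm_smul]
      simp [Real.norm_eq_abs]
      ring
    have h8 : ‖V - Y‖^2 ≤ ‖V - z‖^2 := by
      apply pow_le_pow_left₀ (norm_nonneg _) h1 2
    rw [h2, h3, h4, h5, h6, h7] at h8
    linarith
  -- combine: ‖b‖² = 0
  have hb0 : b = 0 := by
    have hB : ‖b‖^2 ≤ 0 := by nlinarith [hi, hii, hτ0, hτt, ht3, sq_nonneg ‖b‖]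
    have : ‖b‖ = 0 := by nlinarith [norm_nonneg b]
    exact norm_eq_zero.mp this
  -- conclude
  have hYz : Y = z := by rw [← sub_eq_zero]; exact hb ▸ hb0
  have hVeq : V = z + t•ν := by
    have h1 : w - V = z := hYz
    rw [hw] at h1
    have h3 : z + (z + t•ν) = z + V := sub_eq_iff_eq_add.mp h1
    exact (add_left_cancel h3).symm
  rw [← hVeq, ← hYd, hYz, hVeq, dist_eq_norm]
  simp only [add_sub_cancel_left, norm_smul, Real.norm_eq_abs, hν]
  rw [abs_of_pos (by linarith : (0:ℝ) < t)]; ring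

/-- For small `t`, the distance of `z + t•ν` to `C` equals `t`. -/
lemma small_step (C : Set H) {r : ℝ}
    (p : H → H)
    (hp : ∀ s : H, Metric.infDist s C < r →
      (p s ∈ C ∧ dist s (p s) = Metric.infDist s C) ∧
      ∀ y ∈ C, dist s y = Metric.infDist s C → y = p s)
    {z : H} (hz : z ∈ C) {ξ : H} (hξ0 : ξ ≠ 0)
    {σ δ : ℝ} (hσ : 0 < σ) (hδ : 0 < δ)
    (hcone : ∀ y ∈ C, ‖y - z‖ ≤ σ → ⟪ξ, y - z⟫ ≤ δ * ‖y - z‖ ^ 2)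
    {t : ℝ} (ht0 : 0 < t) (htσ : t ≤ σ/2) (htδ : t ≤ ‖ξ‖/(4*δ)) (htr : t < r) :
    Metric.infDist (z + t•(‖ξ‖⁻¹•ξ)) C = t := by
  set ν : H := ‖ξ‖⁻¹•ξ with hν'
  have hξn : 0 < ‖ξ‖ := norm_pos_iff.mpr hξ0
  have hν : ‖ν‖ = 1 := by
    rw [hν', norm_smul, Real.norm_eq_abs, abs_of_pos (by positivity)]
    field_simp
  set s : H := z + t•ν with hs
  have hsz : dist s z = t := by
    rw [dist_eq_norm, hs]
    simp only [add_sub_cancel_left, norm_smul, Real.norm_eq_abs, abs_of_pos ht0, hν]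
    ring
  have hds : Metric.infDist s C < r := by
    calc Metric.infDist s C ≤ dist s z := infDist_le_dist_of_mem hz
      _ = t := hsz
      _ < r := htr
  obtain ⟨⟨hqC, hqd⟩, _⟩ := hp s hds
  set q : H := p s with hq
  have hdle : dist s q ≤ t := by
    rw [hqd]
    calc Metric.infDist s C ≤ dist s z := infDist_le_dist_of_mem hz
      _ = t := hsz
  have hρσ : ‖q - z‖ ≤ σ := by
    have h1 : dist q z ≤ dist q s + dist s z := dist_triangle q s z
    rw [dist_comm q s] at h1
    rw [← dist_eq_norm]
    linarith [hdle, hsz ▸ h1, htσ, hsz.le]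
  have hlocal : ⟪ξ, q - z⟫ ≤ δ * ‖q - z‖^2 := hcone q hqC hρσ
  have hexp : ‖s - q‖^2 = t^2 - 2*t*⟪ν, q - z⟫ + ‖q - z‖^2 := by
    have e1 : s - q = t•ν - (q - z) := by rw [hs]; abel
    rw [e1]
    exact norm_smul_unit_sub_sq hν ht0.le (q - z)
  have hinner : ⟪ν, q - z⟫ = ‖ξ‖⁻¹ * ⟪ξ, q - z⟫ := by
    rw [hν', real_inner_smul_left]
  have hsq : ‖s - q‖^2 ≤ t^2 := by
    have h1 : ‖s - q‖ ≤ t := by rw [← dist_eq_norm]; exact hdle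
    nlinarith [norm_nonneg (s - q)]
  have hcoef : 2*t*δ*‖ξ‖⁻¹ ≤ 1/2 := by
    have h1 : 4*δ*t ≤ ‖ξ‖ := by
      rw [le_div_iff₀ (by positivity)] at htδ
      linarith
    have h2 : (0:ℝ) < ‖ξ‖⁻¹ := by positivity
    have h3 : 2*t*δ*‖ξ‖⁻¹ ≤ (‖ξ‖/2)*‖ξ‖⁻¹ := by nlinarith
    have h4 : (‖ξ‖/2)*‖ξ‖⁻¹ = 1/2 := by field_simp
    linarith
  have hq0 : ‖q - z‖^2 ≤ 0 := by
    have h1 : ‖q - z‖^2 ≤ 2*t*(‖ξ‖⁻¹ * ⟪ξ, q - z⟫) := by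
      rw [← hinner]; nlinarith [hexp, hsq]
    have h2 : ‖ξ‖⁻¹ * ⟪ξ, q - z⟫ ≤ ‖ξ‖⁻¹ * (δ * ‖q - z‖^2) := by
      apply mul_le_mul_of_nonneg_left hlocal (by positivity)
    have h3 : 2*t*(‖ξ‖⁻¹ * (δ * ‖q - z‖^2)) = (2*t*δ*‖ξ‖⁻¹) * ‖q - z‖^2 := by ring
    nlinarith [sq_nonneg ‖q - z‖, hcoef, ht0]
  have hqz : q = z := by
    have : ‖q - z‖ = 0 := by nlinarith [norm_nonneg (q - z)]
    have := norm_eq_zero.mp this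
    exact sub_eq_zero.mp this
  rw [show Metric.infDist (z + t•(‖ξ‖⁻¹•ξ)) C = Metric.infDist s C from rfl, ← hqd, hqz, hsz]

/-- Key hypomonotonicity estimate: a proximal normal at a point of an
`r`-prox-regular set satisfies the global inequality with constant `‖ξ‖/(2r)`. -/
lemma prox_normal_global (C : Set H) (hCne : C.Nonempty)
    {r : ℝ} (hr : 0 < r) (hreg : IsProxRegular C r)
    {z : H} (hz : z ∈ C) {ξ : H} (hξ : ξ ∈ proxNormalCone C z) :
    ∀ y ∈ C, ⟪ξ, y - z⟫ ≤ ‖ξ‖/(2*r) * ‖y - z‖^2 := by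
  intro y hy
  rcases eq_or_ne ξ 0 with rfl | hξ0
  · simp
  obtain ⟨p, hp, hcont⟩ := hreg
  obtain ⟨σ, hσ, δ, hδ, hcone⟩ := hξ
  have hξn : 0 < ‖ξ‖ := norm_pos_iff.mpr hξ0
  set ν : H := ‖ξ‖⁻¹•ξ with hν'
  have hν : ‖ν‖ = 1 := by
    rw [hν', norm_smul, Real.norm_eq_abs, abs_of_pos (by positivity)]
    field_simp
  set t₀ : ℝ := min (min (σ/2) (‖ξ‖/(4*δ))) (r/2) with ht₀
  have ht₀pos : 0 < t₀ := by
    apply lt_min (lt_min (by positivity) (by positivity)) (by positivity)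
  -- every radius t ∈ [0, r) is realized
  have hrealized : ∀ t : ℝ, 0 ≤ t → t < r → Metric.infDist (z + t•ν) C = t := by
    intro t ht0 htr
    rcases eq_or_lt_of_le ht0 with rfl | htpos
    · simp [Metric.infDist_zero_of_mem hz]
    -- B = set of realized radii in [0, t]
    set B : Set ℝ := {s : ℝ | s ∈ Icc 0 t ∧ Metric.infDist (z + s•ν) C = s} with hB
    have hBclosed : IsClosed B := by
      apply IsClosed.inter isClosed_Icc
      apply isClosed_eq
      · exact (continuous_infDist_pt C).comp (continuous_const.add (continuous_id.smul continuous_const))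
      · exact continuous_id
    have hBcompact : IsCompact B := by
      apply (isCompact_Icc (a := (0:ℝ)) (b := t)).of_isClosed_subset hBclosed
      intro s hs; exact hs.1
    have hB0 : (0:ℝ) ∈ B := by
      constructor
      · exact ⟨le_refl 0, ht0⟩
      · simp [Metric.infDist_zero_of_mem hz]
    have hBne : B.Nonempty := ⟨0, hB0⟩
    set τ : ℝ := sSup B with hτ
    have hτB : τ ∈ B := hBcompact.sSup_mem hBne
    have hτle : τ ≤ t := hτB.1.2
    have hτreal : Metric.infDist (z + τ•ν) C = τ := hτB.2
    -- τ ≥ min t₀ t > 0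
    have hmem_t1 : min t₀ t ∈ B := by
      have h1 : 0 < min t₀ t := lt_min ht₀pos htpos
      constructor
      · exact ⟨h1.le, min_le_right _ _⟩
      · apply small_step C p hp hz hξ0 hσ hδ hcone h1
        · calc min t₀ t ≤ t₀ := min_le_left _ _
            _ ≤ min (σ/2) (‖ξ‖/(4*δ)) := min_le_left _ _
            _ ≤ σ/2 := min_le_left _ _
        · calc min t₀ t ≤ t₀ := min_le_left _ _
            _ ≤ min (σ/2) (‖ξ‖/(4*δ)) := min_le_left _ _
            _ ≤ ‖ξ‖/(4*δ) := min_le_right _ _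
        · calc min t₀ t ≤ t := min_le_right _ _
            _ < r := htr
    have hτpos : 0 < τ := by
      have := le_csSup hBcompact.bddAbove hmem_t1
      have h1 : 0 < min t₀ t := lt_min ht₀pos htpos
      linarith
    -- τ = t
    by_contra hne
    have hτt : τ < t := by
      rcases lt_or_eq_of_le hτle with h | h
      · exact h
      · exact absurd (h ▸ hτreal) (by rw [h] at *; exact fun he => hne he)
    set t₂ : ℝ := min (2*τ) t with ht₂
    have ht₂B : t₂ ∈ B := by
      constructor
      · constructor
        · have : 0 < t₂ := lt_min (by linarith) htpos
          linarith
        · exact min_le_right _ _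
      · apply extend_step C hCne p hp hcont hz hν hτpos _ _ _ hτreal
        · exact lt_min (by linarith) hτt
        · calc t₂ ≤ 2*τ := min_le_left _ _
            _ < 3*τ := by linarith
        · calc t₂ ≤ t := min_le_right _ _
            _ < r := htr
    have := le_csSup hBcompact.bddAbove ht₂B
    have ht₂τ : τ < t₂ := lt_min (by linarith) hτt
    linarith
  -- conclude the inequality
  have hineq : ∀ t : ℝ, 0 < t → t < r → 2*t*⟪ν, y - z⟫ ≤ ‖y - z‖^2 := by
    intro t ht0 htr
    have hreal := hrealized t ht0.le htr
    have h1 : t ≤ dist (z + t•ν) y := by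
      have h1' := infDist_le_dist_of_mem (x := z + t•ν) hy
      rw [hreal] at h1'
      exact h1'
    rw [dist_eq_norm] at h1
    have h2 : z + t•ν - y = t•ν - (y - z) := by abel
    have h3 : ‖t•ν - (y - z)‖^2 = t^2 - 2*t*⟪ν, y - z⟫ + ‖y - z‖^2 := by
      rw [norm_sub_sq_real, real_inner_smul_left, norm_smul, Real.norm_eq_abs,
        abs_of_pos ht0, hν]
      ring
    have h4 : t^2 ≤ ‖z + t•ν - y‖^2 := pow_le_pow_left₀ ht0.le h1 2
    rw [h2, h3] at h4
    linarith
  have hνineq : 2*r*⟪ν, y - z⟫ ≤ ‖y - z‖^2 := by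
    by_contra hcon
    push_neg at hcon
    have hpos : 0 < ⟪ν, y - z⟫ := by nlinarith [sq_nonneg ‖y - z‖, hr]
    set t : ℝ := (‖y - z‖^2/(2*⟪ν, y - z⟫) + r)/2 with ht
    have h1 : ‖y - z‖^2/(2*⟪ν, y - z⟫) < r := by
      rw [div_lt_iff₀ (by positivity)]
      nlinarith
    have ht0 : 0 < t := by positivity
    have htr : t < r := by rw [ht]; linarith
    have h2 : ‖y - z‖^2/(2*⟪ν, y - z⟫) < t := by rw [ht]; linarith
    have h3 := hineq t ht0 htr
    rw [div_lt_iff₀ (by positivity)] at h2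
    nlinarith
  have hfinal : ⟪ξ, y - z⟫ = ‖ξ‖ * ⟪ν, y - z⟫ := by
    rw [hν', real_inner_smul_left]
    field_simp
  rw [hfinal]
  rw [div_mul_eq_mul_div, le_div_iff₀ (by positivity)]
  nlinarith [hνineq, hξn]


/-- Weak sequential closedness of the normal cone of a prox-regular set: if
`x_n ∈ C`, `x_n → x` strongly, `ξ_n ∈ N(C, x_n)` with `‖ξ_n‖ ≤ β`, and `ξ_n ⇀ ξ`
weakly, then `ξ ∈ N(C, x)`; in particular
`⟪ξ, c - x⟫ ≤ (β/(2r)) ‖c - x‖²` for all `c ∈ C`. -/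
theorem normal_cone_weak_closed (C : Set H) (hC : IsClosed C) (hCne : C.Nonempty)
    (r : ℝ) (hr : 0 < r) (hreg : IsProxRegular C r)
    (x ξ : H) (β : ℝ) (xs ξs : ℕ → H)
    (hxs : ∀ n, xs n ∈ C) (hxconv : Tendsto xs atTop (nhds x))
    (hξs : ∀ n, ξs n ∈ proxNormalCone C (xs n))
    (hβ : ∀ n, ‖ξs n‖ ≤ β)
    (hweak : ∀ y : H, Tendsto (fun n => ⟪ξs n, y⟫) atTop (nhds ⟪ξ, y⟫)) :
    ξ ∈ proxNormalCone C x ∧ ∀ c ∈ C, ⟪ξ, c - x⟫ ≤ β / (2 * r) * ‖c - x‖ ^ 2 := by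
  have hβ0 : 0 ≤ β := le_trans (norm_nonneg (ξs 0)) (hβ 0)
  have hxC : x ∈ C := hC.mem_of_tendsto hxconv (Filter.Eventually.of_forall hxs)
  have hmain : ∀ c ∈ C, ⟪ξ, c - x⟫ ≤ β / (2 * r) * ‖c - x‖ ^ 2 := by
    intro c hc
    -- pointwise inequality for each n
    have hn : ∀ n, ⟪ξs n, c - xs n⟫ ≤ β / (2*r) * ‖c - xs n‖^2 := by
      intro n
      have h1 := prox_normal_global C hCne hr hreg (hxs n) (hξs n) c hc
      have h2 : ‖ξs n‖/(2*r) * ‖c - xs n‖^2 ≤ β/(2*r) * ‖c - xs n‖^2 := by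
        apply mul_le_mul_of_nonneg_right _ (sq_nonneg _)
        exact div_le_div_of_nonneg_right (hβ n) (by positivity) |>.trans_eq rfl
      exact le_trans h1 h2
    -- limits
    have hlhs : Tendsto (fun n => ⟪ξs n, c - xs n⟫) atTop (nhds ⟪ξ, c - x⟫) := by
      have e : ∀ n, ⟪ξs n, c - xs n⟫ = ⟪ξs n, c - x⟫ + ⟪ξs n, x - xs n⟫ := by
        intro n
        rw [← inner_add_right]
        congr 1
        abel
      have h1 : Tendsto (fun n => ⟪ξs n, c - x⟫) atTop (nhds ⟪ξ, c - x⟫) := hweak (c - x)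
      have h2 : Tendsto (fun n => ⟪ξs n, x - xs n⟫) atTop (nhds 0) := by
        have hb : ∀ n, ‖⟪ξs n, x - xs n⟫‖ ≤ β * ‖x - xs n‖ := by
          intro n
          rw [Real.norm_eq_abs]
          exact le_trans (abs_real_inner_le_norm _ _)
            (mul_le_mul_of_nonneg_right (hβ n) (norm_nonneg _))
        have h3 : Tendsto (fun n => x - xs n) atTop (nhds (x - x)) :=
          tendsto_const_nhds.sub hxconv
        rw [sub_self] at h3
        have h4 : Tendsto (fun n => ‖x - xs n‖) atTop (nhds ‖(0:H)‖) :=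
          (continuous_norm.tendsto _).comp h3
        rw [norm_zero] at h4
        have hg := h4.const_mul β
        rw [mul_zero] at hg
        exact squeeze_zero_norm hb hg
      have := h1.add h2
      rw [add_zero] at this
      apply this.congr
      intro n
      rw [← e n]
    have hrhs : Tendsto (fun n => β/(2*r) * ‖c - xs n‖^2) atTop (nhds (β/(2*r) * ‖c - x‖^2)) := by
      have h3 : Tendsto (fun n => c - xs n) atTop (nhds (c - x)) :=
        tendsto_const_nhds.sub hxconv
      have h4 : Tendsto (fun n => ‖c - xs n‖^2) atTop (nhds (‖c - x‖^2)) :=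
        ((continuous_norm.pow 2).tendsto _).comp h3
      exact h4.const_mul _
    exact le_of_tendsto_of_tendsto' hlhs hrhs hn
  refine ⟨?_, hmain⟩
  refine ⟨1, one_pos, β/(2*r) + 1, by positivity, fun y hy hnear => ?_⟩
  have h1 := hmain y hy
  nlinarith [sq_nonneg ‖y - x‖, h1]
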